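/- arXiv:2303.00367 — 4 statements merged into one kernel-verified Lean document; each statement's English description precedes it below -/
import Mathlib

section
/- Let u_h, v_h ∈ V_h. Then there is a constant C > 0, independent of u_h, v_h and h, such that the quadrature error satisfies |δ_h(u_h, v_h)| ≤ C h ‖∂_y u_h‖ ‖∂_y v_h‖, where ‖·‖ denotes the L²(0,Λ) norm. (Lemma 1, first estimate.) -/
open MeasureTheory Set

noncomputable section

/-- `v` belongs to the finite element space `V_h`: continuous on `[0,Λ]`,
affine on each subinterval `[y_j, y_{j+1}]` of the uniform partition with `N`
cells, and vanishing at `Λ`. -/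
def IsVh (Λ : ℝ) (N : ℕ) (v : ℝ → ℝ) : Prop :=
  ContinuousOn v (Set.Icc 0 Λ) ∧
  (∀ j : ℕ, j < N →
    ∃ a b : ℝ, ∀ y ∈ Set.Icc ((j : ℝ) * (Λ / N)) (((j : ℝ) + 1) * (Λ / N)),
      v y = a * y + b) ∧
  v Λ = 0

/-- The discrete inner product `(u,v)_h = h ∑_{j=1}^{N} u(y_j) v(y_j)`,
where `y_j = (j-1) h` and `h = Λ / N`. -/
def dInner (Λ : ℝ) (N : ℕ) (u v : ℝ → ℝ) : ℝ :=
  (Λ / N) * ∑ j ∈ Finset.range N, u ((j : ℝ) * (Λ / N)) * v ((j : ℝ) * (Λ / N))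

lemma polyint (a b c d s t : ℝ) :
    ∫ y in s..t, (a*y+b)*(c*y+d)
    = (a*c/3*t^3 + (a*d+b*c)/2*t^2 + b*d*t) - (a*c/3*s^3 + (a*d+b*c)/2*s^2 + b*d*s) := by
  have key : ∀ y : ℝ, HasDerivAt (fun y : ℝ => a*c/3*y^3 + (a*d+b*c)/2*y^2 + b*d*y)
      ((a*y+b)*(c*y+d)) y := by
    intro y
    have h := (((hasDerivAt_pow 3 y).const_mul (a*c/3)).add
      ((hasDerivAt_pow 2 y).const_mul ((a*d+b*c)/2))).add ((hasDerivAt_id y).const_mul (b*d))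
    refine h.congr_deriv ?_
    push_cast
    ring
  exact intervalIntegral.integral_eq_sub_of_hasDerivAt (fun y _ => key y)
    (Continuous.intervalIntegrable (by continuity) s t)

lemma deriv_affine (f : ℝ → ℝ) (a b s t : ℝ)
    (hf : ∀ y ∈ Set.Icc s t, f y = a*y+b) :
    ∀ y ∈ Set.Ioo s t, deriv f y = a := by
  intro y hy
  have h1 : f =ᶠ[nhds y] fun y => a*y+b :=
    Filter.eventually_of_mem (Ioo_mem_nhds hy.1 hy.2) (fun z hz => hf z (Ioo_subset_Icc_self hz))
  rw [h1.deriv_eq]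
  have := ((hasDerivAt_id y).const_mul a).add_const b
  simpa using this.deriv

lemma deriv_affine_ae (f : ℝ → ℝ) (a b s t : ℝ)
    (hf : ∀ y ∈ Set.Icc s t, f y = a*y+b) :
    ∀ᵐ y ∂(volume.restrict (Set.Ioc s t)), deriv f y = a := by
  rw [ae_restrict_iff' measurableSet_Ioc]
  have ht : ∀ᵐ y : ℝ ∂volume, y ≠ t := by
    rw [ae_iff]
    simpa using measure_singleton (μ := (volume : Measure ℝ)) t
  filter_upwards [ht] with y hy hmem
  exact deriv_affine f a b s t hf y ⟨hmem.1, lt_of_le_of_ne hmem.2 hy⟩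

lemma derivsq_intble (f : ℝ → ℝ) (a b s t : ℝ) (hst : s ≤ t)
    (hf : ∀ y ∈ Set.Icc s t, f y = a*y+b) :
    IntervalIntegrable (fun y => (deriv f y)^2) volume s t := by
  rw [intervalIntegrable_iff, uIoc_of_le hst]
  have h0 : IntegrableOn (fun _ : ℝ => a^2) (Set.Ioc s t) volume :=
    (integrableOn_const_iff).mpr (Or.inr (by simp [Real.volume_Ioc]))
  refine h0.congr ?_
  filter_upwards [deriv_affine_ae f a b s t hf] with y hy
  rw [hy]

lemma derivsq_int (f : ℝ → ℝ) (a b s t : ℝ) (hst : s ≤ t)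
    (hf : ∀ y ∈ Set.Icc s t, f y = a*y+b) :
    ∫ y in s..t, (deriv f y)^2 = a^2*(t-s) := by
  rw [intervalIntegral.integral_of_le hst]
  have heq : ∫ y in Set.Ioc s t, (deriv f y)^2 = ∫ _ in Set.Ioc s t, a^2 :=
    integral_congr_ae ((deriv_affine_ae f a b s t hf).mono
      (fun y hy => by simp only []; rw [hy]))
  rw [heq, setIntegral_const, Real.volume_real_Ioc_of_le hst, smul_eq_mul]
  ring

lemma nodal_formula (N : ℕ) (h : ℝ) (u : ℝ → ℝ) (a : ℕ → ℝ)
    (hrec : ∀ j, j < N → u (((j:ℝ)+1)*h) = u ((j:ℝ)*h) + a j * h)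
    (hend : u ((N:ℝ)*h) = 0) :
    ∀ m j, j + m = N → u ((j:ℝ)*h) = -(h * ∑ k ∈ Finset.Ico j N, a k) := by
  intro m
  induction m with
  | zero => intro j hj; subst hj; simpa using hend
  | succ m ih =>
    intro j hj
    have hjN : j < N := by omega
    have h1 : u (((j:ℝ)+1)*h) = -(h * ∑ k ∈ Finset.Ico (j+1) N, a k) := by
      have := ih (j+1) (by omega)
      push_cast at this
      exact this
    have h2 := hrec j hjN
    rw [Finset.sum_eq_sum_Ico_succ_bot hjN]
    rw [h1] at h2
    linarith [h2]

/-- Lemma 1, first estimate: `|δ_h(u_h,v_h)| ≤ C h ‖∂_y u_h‖ ‖∂_y v_h‖`,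
with `C` independent of `u_h`, `v_h` and `h`. -/
theorem quadrature_error_first_estimate (Λ : ℝ) (hΛ : 0 < Λ) :
    ∃ C > 0, ∀ N : ℕ, 0 < N → ∀ u v : ℝ → ℝ, IsVh Λ N u → IsVh Λ N v →
      |dInner Λ N u v - ∫ y in (0:ℝ)..Λ, u y * v y| ≤
        C * (Λ / N) * Real.sqrt (∫ y in (0:ℝ)..Λ, (deriv u y) ^ 2) *
          Real.sqrt (∫ y in (0:ℝ)..Λ, (deriv v y) ^ 2) := by
  refine ⟨2*Λ, by linarith, ?_⟩
  intro N hN u v hu hv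
  have hNR : (0:ℝ) < N := by exact_mod_cast hN
  obtain ⟨uc, ua, u0⟩ := hu
  obtain ⟨vc, va, v0⟩ := hv
  choose! a b hab using ua
  choose! c d hcd using va
  set hh : ℝ := Λ / N with hhdef
  have hhpos : 0 < hh := div_pos hΛ hNR
  have hNh : (N:ℝ) * hh = Λ := by rw [hhdef]; field_simp
  have xle : ∀ j : ℕ, (j:ℝ)*hh ≤ ((j:ℝ)+1)*hh := fun j => by nlinarith [hhpos]
  have cellsub : ∀ j : ℕ, j < N →
      Set.Icc ((j:ℝ)*hh) (((j:ℝ)+1)*hh) ⊆ Set.Icc 0 Λ := by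
    intro j hj y hy
    have hj1 : ((j:ℝ)+1) ≤ (N:ℝ) := by exact_mod_cast Nat.succ_le_of_lt hj
    have h0 : (0:ℝ) ≤ (j:ℝ)*hh := by positivity
    have h2 : ((j:ℝ)+1)*hh ≤ (N:ℝ)*hh := mul_le_mul_of_nonneg_right hj1 hhpos.le
    exact ⟨le_trans h0 hy.1, by rw [← hNh]; exact le_trans hy.2 h2⟩
  -- nodal values
  have uval : ∀ j, j < N → u ((j:ℝ)*hh) = a j * ((j:ℝ)*hh) + b j :=
    fun j hj => hab j hj _ ⟨le_rfl, xle j⟩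
  have uval' : ∀ j, j < N → u (((j:ℝ)+1)*hh) = a j * (((j:ℝ)+1)*hh) + b j :=
    fun j hj => hab j hj _ ⟨xle j, le_rfl⟩
  have vval : ∀ j, j < N → v ((j:ℝ)*hh) = c j * ((j:ℝ)*hh) + d j :=
    fun j hj => hcd j hj _ ⟨le_rfl, xle j⟩
  have vval' : ∀ j, j < N → v (((j:ℝ)+1)*hh) = c j * (((j:ℝ)+1)*hh) + d j :=
    fun j hj => hcd j hj _ ⟨xle j, le_rfl⟩
  -- nodal recursions and formula bounds
  have hrecu : ∀ j, j < N → u (((j:ℝ)+1)*hh) = u ((j:ℝ)*hh) + a j * hh := by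
    intro j hj; rw [uval j hj, uval' j hj]; ring
  have hrecv : ∀ j, j < N → v (((j:ℝ)+1)*hh) = v ((j:ℝ)*hh) + c j * hh := by
    intro j hj; rw [vval j hj, vval' j hj]; ring
  have unodal := nodal_formula N hh u a hrecu (by rw [hNh]; exact u0)
  have vnodal := nodal_formula N hh v c hrecv (by rw [hNh]; exact v0)
  set Tu : ℝ := ∑ k ∈ Finset.range N, |a k| with Tudef
  set Tv : ℝ := ∑ k ∈ Finset.range N, |c k| with Tvdef
  have Tunn : 0 ≤ Tu := Finset.sum_nonneg fun k _ => abs_nonneg _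
  have Tvnn : 0 ≤ Tv := Finset.sum_nonneg fun k _ => abs_nonneg _
  have nodal_bound : ∀ (w : ℝ → ℝ) (e : ℕ → ℝ),
      (∀ m j, j + m = N → w ((j:ℝ)*hh) = -(hh * ∑ k ∈ Finset.Ico j N, e k)) →
      ∀ j, j < N → |w ((j:ℝ)*hh)| ≤ hh * ∑ k ∈ Finset.range N, |e k| := by
    intro w e hw j hj
    rw [hw (N - j) j (by omega), abs_neg, abs_mul, abs_of_pos hhpos]
    refine mul_le_mul_of_nonneg_left ?_ hhpos.le
    calc |∑ k ∈ Finset.Ico j N, e k| ≤ ∑ k ∈ Finset.Ico j N, |e k| :=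
          Finset.abs_sum_le_sum_abs _ _
      _ ≤ ∑ k ∈ Finset.range N, |e k| := by
          refine Finset.sum_le_sum_of_subset_of_nonneg ?_ (fun k _ _ => abs_nonneg _)
          intro k hk
          rw [Finset.mem_range]
          exact (Finset.mem_Ico.mp hk).2
  have Pu : ∀ j, j < N → |u ((j:ℝ)*hh)| ≤ hh * Tu := nodal_bound u a unodal
  have Pv : ∀ j, j < N → |v ((j:ℝ)*hh)| ≤ hh * Tv := nodal_bound v c vnodal
  -- splitting integrals over cells
  have key : ∀ (f : ℝ → ℝ),
      (∀ k, k < N → IntervalIntegrable f volume ((k:ℝ)*hh) (((k:ℝ)+1)*hh)) →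
      ∫ y in (0:ℝ)..Λ, f y
        = ∑ j ∈ Finset.range N, ∫ y in ((j:ℝ)*hh)..(((j:ℝ)+1)*hh), f y := by
    intro f hf
    have h1 : ∀ k, k < N →
        IntervalIntegrable f volume ((fun k : ℕ => (k:ℝ)*hh) k) ((fun k : ℕ => (k:ℝ)*hh) (k+1)) := by
      intro k hk
      have := hf k hk
      simpa [Nat.cast_add] using this
    have h2 := intervalIntegral.sum_integral_adjacent_intervals (μ := volume) h1
    simp only [Nat.cast_zero, zero_mul, Nat.cast_add, Nat.cast_one] at h2
    rw [hNh] at h2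
    rw [← h2]
  have cint : ContinuousOn (fun y => u y * v y) (Set.Icc 0 Λ) := uc.mul vc
  have huv_int : ∀ k, k < N →
      IntervalIntegrable (fun y => u y * v y) volume ((k:ℝ)*hh) (((k:ℝ)+1)*hh) :=
    fun k hk => ContinuousOn.intervalIntegrable_of_Icc (xle k) (cint.mono (cellsub k hk))
  have hsplit_uv := key (fun y => u y * v y) huv_int
  set Su2 : ℝ := ∑ j ∈ Finset.range N, (a j)^2 with Su2def
  set Sv2 : ℝ := ∑ j ∈ Finset.range N, (c j)^2 with Sv2def
  have Su2nn : 0 ≤ Su2 := Finset.sum_nonneg fun k _ => sq_nonneg _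
  have Sv2nn : 0 ≤ Sv2 := Finset.sum_nonneg fun k _ => sq_nonneg _
  have hDu : ∫ y in (0:ℝ)..Λ, (deriv u y)^2 = hh * Su2 := by
    rw [key (fun y => (deriv u y)^2)
      (fun k hk => derivsq_intble u (a k) (b k) _ _ (xle k) (hab k hk))]
    rw [Finset.sum_congr rfl (fun k hk => derivsq_int u (a k) (b k) _ _ (xle k)
      (hab k (Finset.mem_range.mp hk)))]
    rw [Su2def, Finset.mul_sum]
    exact Finset.sum_congr rfl fun k _ => by ring
  have hDv : ∫ y in (0:ℝ)..Λ, (deriv v y)^2 = hh * Sv2 := by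
    rw [key (fun y => (deriv v y)^2)
      (fun k hk => derivsq_intble v (c k) (d k) _ _ (xle k) (hcd k hk))]
    rw [Finset.sum_congr rfl (fun k hk => derivsq_int v (c k) (d k) _ _ (xle k)
      (hcd k (Finset.mem_range.mp hk)))]
    rw [Sv2def, Finset.mul_sum]
    exact Finset.sum_congr rfl fun k _ => by ring
  -- per-cell integral and error identity
  have hcellint : ∀ j, j < N → ∫ y in ((j:ℝ)*hh)..(((j:ℝ)+1)*hh), u y * v y
      = (a j*c j/3*(((j:ℝ)+1)*hh)^3 + (a j*d j+b j*c j)/2*(((j:ℝ)+1)*hh)^2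
          + b j*d j*(((j:ℝ)+1)*hh))
        - (a j*c j/3*((j:ℝ)*hh)^3 + (a j*d j+b j*c j)/2*((j:ℝ)*hh)^2
          + b j*d j*((j:ℝ)*hh)) := by
    intro j hj
    rw [intervalIntegral.integral_congr (g := fun y => (a j*y+b j)*(c j*y+d j)) ?_]
    · exact polyint (a j) (b j) (c j) (d j) _ _
    · intro y hy
      rw [uIcc_of_le (xle j)] at hy
      show u y * v y = (a j*y+b j)*(c j*y+d j)
      rw [hab j hj y hy, hcd j hj y hy]
  have hcellerr : ∀ j, j < N →
      hh * (u ((j:ℝ)*hh) * v ((j:ℝ)*hh)) - (∫ y in ((j:ℝ)*hh)..(((j:ℝ)+1)*hh), u y * v y)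
      = -(hh^2/2*(a j * v ((j:ℝ)*hh) + c j * u ((j:ℝ)*hh)) + hh^3/3*(a j * c j)) := by
    intro j hj
    rw [hcellint j hj, uval j hj, vval j hj]
    ring
  -- decomposition of the error
  have hdelta : dInner Λ N u v - ∫ y in (0:ℝ)..Λ, u y * v y
      = ∑ j ∈ Finset.range N,
          (hh * (u ((j:ℝ)*hh) * v ((j:ℝ)*hh))
            - ∫ y in ((j:ℝ)*hh)..(((j:ℝ)+1)*hh), u y * v y) := by
    rw [hsplit_uv]
    simp only [dInner, ← hhdef]
    rw [Finset.mul_sum, Finset.sum_sub_distrib]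
  -- termwise bound
  have term_bound : ∀ j ∈ Finset.range N,
      |hh * (u ((j:ℝ)*hh) * v ((j:ℝ)*hh))
        - ∫ y in ((j:ℝ)*hh)..(((j:ℝ)+1)*hh), u y * v y|
      ≤ (hh^3/2*Tv)*|a j| + (hh^3/2*Tu)*|c j| + (hh^3/3*Tv)*|a j| := by
    intro j hj'
    have hj := Finset.mem_range.mp hj'
    rw [hcellerr j hj, abs_neg]
    have hcj : |c j| ≤ Tv :=
      Finset.single_le_sum (f := fun k => |c k|) (fun k _ => abs_nonneg _) hj'
    calc |hh^2/2*(a j * v ((j:ℝ)*hh) + c j * u ((j:ℝ)*hh)) + hh^3/3*(a j * c j)|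
        ≤ |hh^2/2*(a j * v ((j:ℝ)*hh) + c j * u ((j:ℝ)*hh))| + |hh^3/3*(a j * c j)| :=
          abs_add_le _ _
      _ ≤ hh^2/2*(|a j| * (hh*Tv) + |c j| * (hh*Tu)) + hh^3/3*(|a j| * Tv) := by
          rw [abs_mul, abs_mul, abs_of_pos (by positivity : (0:ℝ) < hh^2/2),
            abs_of_pos (by positivity : (0:ℝ) < hh^3/3), abs_mul]
          refine add_le_add (mul_le_mul_of_nonneg_left ?_ (by positivity))
            (mul_le_mul_of_nonneg_left ?_ (by positivity))
          · refine (abs_add_le _ _).trans ?_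
            rw [abs_mul, abs_mul]
            exact add_le_add
              (mul_le_mul_of_nonneg_left (Pv j hj) (abs_nonneg _))
              (mul_le_mul_of_nonneg_left (Pu j hj) (abs_nonneg _))
          · exact mul_le_mul_of_nonneg_left hcj (abs_nonneg _)
      _ = (hh^3/2*Tv)*|a j| + (hh^3/2*Tu)*|c j| + (hh^3/3*Tv)*|a j| := by ring
  -- sum the bounds
  have sum_bound : |dInner Λ N u v - ∫ y in (0:ℝ)..Λ, u y * v y|
      ≤ 2*hh^3*(Tu*Tv) := by
    rw [hdelta]
    calc |∑ j ∈ Finset.range N, _| ≤ ∑ j ∈ Finset.range N, _ :=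
          Finset.abs_sum_le_sum_abs _ _
      _ ≤ ∑ j ∈ Finset.range N,
            ((hh^3/2*Tv)*|a j| + (hh^3/2*Tu)*|c j| + (hh^3/3*Tv)*|a j|) :=
          Finset.sum_le_sum term_bound
      _ = (hh^3/2*Tv)*Tu + (hh^3/2*Tu)*Tv + (hh^3/3*Tv)*Tu := by
          rw [Finset.sum_add_distrib, Finset.sum_add_distrib,
            ← Finset.mul_sum, ← Finset.mul_sum, ← Finset.mul_sum]
      _ ≤ 2*hh^3*(Tu*Tv) := by nlinarith [mul_nonneg Tunn Tvnn, pow_pos hhpos 3]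
  -- Cauchy–Schwarz
  have CS : ∀ (e : ℕ → ℝ), (∑ k ∈ Finset.range N, |e k|)
      ≤ Real.sqrt ((N:ℝ) * ∑ k ∈ Finset.range N, (e k)^2) := by
    intro e
    refine Real.le_sqrt_of_sq_le ?_
    have h1 := sq_sum_le_card_mul_sum_sq (s := Finset.range N) (f := fun k => |e k|)
    rw [Finset.card_range] at h1
    calc (∑ k ∈ Finset.range N, |e k|)^2 ≤ (N:ℝ) * ∑ k ∈ Finset.range N, |e k|^2 := by
          exact_mod_cast h1
      _ = (N:ℝ) * ∑ k ∈ Finset.range N, (e k)^2 := by simp [sq_abs]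
  have CSu : Tu ≤ Real.sqrt ((N:ℝ) * Su2) := CS a
  have CSv : Tv ≤ Real.sqrt ((N:ℝ) * Sv2) := CS c
  rw [hDu, hDv]
  calc |dInner Λ N u v - ∫ y in (0:ℝ)..Λ, u y * v y|
      ≤ 2*hh^3*(Tu*Tv) := sum_bound
    _ ≤ 2*hh^3*(Real.sqrt ((N:ℝ)*Su2) * Real.sqrt ((N:ℝ)*Sv2)) := by
        refine mul_le_mul_of_nonneg_left ?_ (by positivity)
        exact mul_le_mul CSu CSv Tvnn (Real.sqrt_nonneg _)
    _ = 2*Λ*hh*Real.sqrt (hh*Su2)*Real.sqrt (hh*Sv2) := by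
        rw [Real.sqrt_mul (Nat.cast_nonneg N), Real.sqrt_mul (Nat.cast_nonneg N),
          Real.sqrt_mul hhpos.le, Real.sqrt_mul hhpos.le, ← hNh]
        have e2 : Real.sqrt hh * Real.sqrt hh = hh := Real.mul_self_sqrt hhpos.le
        have e3 : Real.sqrt (N:ℝ) * Real.sqrt (N:ℝ) = (N:ℝ) :=
          Real.mul_self_sqrt (Nat.cast_nonneg N)
        linear_combination (2*hh^3*Real.sqrt Su2*Real.sqrt Sv2) * e3
          - (2*(N:ℝ)*hh^2*Real.sqrt Su2*Real.sqrt Sv2) * e2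
end
end

section
/- Let u_h, v_h ∈ V_h. Then there is a constant C > 0, independent of u_h, v_h and h, such that the quadrature error satisfies |δ_h(u_h, v_h)| ≤ C √h ‖∂_y u_h‖ ‖v_h‖, where ‖·‖ denotes the L²(0,Λ) norm. (Lemma 1, second estimate.) -/
open MeasureTheory Set

lemma cell_integral (p q r s H : ℝ) :
    ∫ t in (0:ℝ)..H, (p + r*t)*(q + s*t)
      = p*q*H + (r*q + p*s)*H^2/2 + r*s*H^3/3 := by
  have hd : ∀ t : ℝ, HasDerivAt (fun t => p*q*t + (r*q + p*s)*t^2/2 + r*s*t^3/3)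
      ((p + r*t)*(q + s*t)) t := by
    intro t
    have h1 : HasDerivAt (fun t : ℝ => p*q*t + (r*q + p*s)*t^2/2 + r*s*t^3/3)
        (p*q + (r*q + p*s)*(2*t)/2 + r*s*(3*t^2)/3) t := by
      apply HasDerivAt.add
      apply HasDerivAt.add
      · simpa using (hasDerivAt_id t).const_mul (p*q)
      · simpa using ((hasDerivAt_pow 2 t).const_mul ((r*q+p*s))).div_const 2
      · simpa using ((hasDerivAt_pow 3 t).const_mul (r*s)).div_const 3
    convert h1 using 1; ring
  rw [intervalIntegral.integral_eq_sub_of_hasDerivAt (fun t _ => hd t)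
    (Continuous.intervalIntegrable (by continuity) 0 H)]
  ring


noncomputable section

/-- Lemma 1, second estimate: `|δ_h(u_h,v_h)| ≤ C √h ‖∂_y u_h‖ ‖v_h‖`,
with `C` independent of `u_h`, `v_h` and `h`. -/
theorem quadrature_error_second_estimate (Λ : ℝ) (hΛ : 0 < Λ) :
    ∃ C > 0, ∀ N : ℕ, 0 < N → ∀ u v : ℝ → ℝ, IsVh Λ N u → IsVh Λ N v →
      |dInner Λ N u v - ∫ y in (0:ℝ)..Λ, u y * v y| ≤
        C * Real.sqrt (Λ / N) * Real.sqrt (∫ y in (0:ℝ)..Λ, (deriv u y) ^ 2) *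
          Real.sqrt (∫ y in (0:ℝ)..Λ, (v y) ^ 2) := by
  have hC1 : (0:ℝ) < Real.sqrt (3*Λ/2) := Real.sqrt_pos.mpr (by linarith)
  have hC2 : (0:ℝ) ≤ Real.sqrt (Λ/3) := Real.sqrt_nonneg _
  refine ⟨Real.sqrt (3*Λ/2) + Real.sqrt (Λ/3), by linarith, ?_⟩
  intro N hN u v hu hv
  have hNR : (0:ℝ) < N := Nat.cast_pos.mpr hN
  set h : ℝ := Λ / N with hh
  have hh0 : 0 < h := div_pos hΛ hNR
  have hhΛ : h ≤ Λ := by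
    rw [hh, div_le_iff₀ hNR]; have h1 : (1:ℝ) ≤ N := Nat.one_le_cast.mpr hN
    nlinarith
  set x : ℕ → ℝ := fun j => (j:ℝ) * h with hx
  have hxle : ∀ j : ℕ, x j < x (j+1) := by
    intro j; simp only [hx]; push_cast; nlinarith
  have hxN : x N = Λ := by simp only [hx, hh]; field_simp
  have hx0 : x 0 = 0 := by simp [hx]
  have hdx : ∀ j : ℕ, x (j+1) - x j = h := by
    intro j; simp only [hx]; push_cast; ring
  have hx_mem : ∀ j : ℕ, j < N → ∀ y ∈ Icc (x j) (x (j+1)), y ∈ Icc 0 Λ := by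
    intro j hj y hy
    constructor
    · refine le_trans ?_ hy.1
      simp only [hx]; positivity
    · refine le_trans hy.2 ?_
      rw [← hxN]; simp only [hx]
      have : ((j:ℝ)+1) ≤ (N:ℝ) := by exact_mod_cast Nat.succ_le_of_lt hj
      push_cast; nlinarith
  -- affine representation
  have key : ∀ (w : ℝ → ℝ), IsVh Λ N w → ∀ j < N, ∀ y ∈ Icc (x j) (x (j+1)),
      w y = w (x j) + ((w (x (j+1)) - w (x j))/h) * (y - x j) := by
    intro w hw j hj y hy
    obtain ⟨a, b, hab⟩ := hw.2.1 j hj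
    have e1 : (j:ℝ) * (Λ / N) = x j := rfl
    have e2 : ((j:ℝ) + 1) * (Λ / N) = x (j+1) := by simp only [hx, hh]; push_cast; ring
    rw [e1, e2] at hab
    have hwy := hab y hy
    have hwl := hab (x j) (left_mem_Icc.mpr (hxle j).le)
    have hwr := hab (x (j+1)) (right_mem_Icc.mpr (hxle j).le)
    have hs : (w (x (j+1)) - w (x j))/h = a := by
      rw [hwl, hwr, show a * x (j+1) + b - (a * x j + b) = a * (x (j+1) - x j) by ring, hdx j]
      field_simp
    rw [hwy, hs, hwl]; ring
  set U : ℕ → ℝ := fun j => u (x j) with hU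
  set V : ℕ → ℝ := fun j => v (x j) with hV
  set a : ℕ → ℝ := fun j => (U (j+1) - U j)/h with ha
  set c : ℕ → ℝ := fun j => (V (j+1) - V j)/h with hc
  have hUN : U N = 0 := by simp only [hU, hxN]; exact hu.2.2
  have hVN : V N = 0 := by simp only [hV, hxN]; exact hv.2.2
  -- derivative of u on open cells
  have hderiv : ∀ j, j < N → ∀ y ∈ Ioo (x j) (x (j+1)), deriv u y = a j := by
    intro j hj y hy
    have hev : u =ᶠ[nhds y] (fun z => U j + a j * (z - x j)) := by
      filter_upwards [isOpen_Ioo.mem_nhds hy] with z hz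
      exact key u hu j hj z (Ioo_subset_Icc_self hz)
    rw [Filter.EventuallyEq.deriv_eq hev]
    have : HasDerivAt (fun z : ℝ => U j + a j * (z - x j)) (a j * 1) y :=
      (((hasDerivAt_id y).sub_const (x j)).const_mul (a j)).const_add (U j)
    simpa using this.deriv
  -- integrability on cells
  have hint_uv : ∀ j < N, IntervalIntegrable (fun y => u y * v y) volume (x j) (x (j+1)) := by
    intro j hj
    apply ContinuousOn.intervalIntegrable
    rw [uIcc_of_le (hxle j).le]
    exact ((hu.1.mono (fun y hy => hx_mem j hj y hy)).mul
      (hv.1.mono (fun y hy => hx_mem j hj y hy)))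
  have hint_v2 : ∀ j < N, IntervalIntegrable (fun y => (v y)^2) volume (x j) (x (j+1)) := by
    intro j hj
    apply ContinuousOn.intervalIntegrable
    rw [uIcc_of_le (hxle j).le]
    exact (hv.1.mono (fun y hy => hx_mem j hj y hy)).pow 2
  have hae : ∀ j < N, (fun y => (deriv u y)^2) =ᵐ[volume.restrict (Ioc (x j) (x (j+1)))]
      (fun _ => (a j)^2) := by
    intro j hj
    rw [Filter.EventuallyEq, ae_restrict_iff' measurableSet_Ioc]
    have hsing : (volume : Measure ℝ) {x (j+1)} = 0 := measure_singleton _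
    filter_upwards [compl_mem_ae_iff.mpr hsing] with y hy hy2
    have : y ∈ Ioo (x j) (x (j+1)) := ⟨hy2.1, lt_of_le_of_ne hy2.2 hy⟩
    rw [hderiv j hj y this]
  have hint_du2 : ∀ j < N, IntervalIntegrable (fun y => (deriv u y)^2) volume (x j) (x (j+1)) := by
    intro j hj
    rw [intervalIntegrable_iff_integrableOn_Ioc_of_le (hxle j).le]
    exact ((integrableOn_const_iff (C := (a j)^2)).mpr (Or.inr measure_Ioc_lt_top)).congr_fun_ae (hae j hj).symm
  -- cell integral values
  have int_uv_cell : ∀ j < N, ∫ y in x j..x (j+1), u y * v y =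
      U j * V j * h + (a j * V j + U j * c j) * h^2/2 + a j * c j * h^3/3 := by
    intro j hj
    have : EqOn (fun y => u y * v y)
        (fun y => (U j + a j * (y - x j)) * (V j + c j * (y - x j))) (uIcc (x j) (x (j+1))) := by
      intro y hy
      rw [uIcc_of_le (hxle j).le] at hy
      simp only
      rw [key u hu j hj y hy, key v hv j hj y hy]
    rw [intervalIntegral.integral_congr this]
    have := intervalIntegral.integral_comp_sub_right
      (fun t => (U j + a j * t) * (V j + c j * t)) (x j) (a := x j) (b := x (j+1))
    rw [this, sub_self, hdx j, cell_integral]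
  have int_v2_cell : ∀ j < N, ∫ y in x j..x (j+1), (v y)^2 =
      V j * V j * h + (c j * V j + V j * c j) * h^2/2 + c j * c j * h^3/3 := by
    intro j hj
    have : EqOn (fun y => (v y)^2)
        (fun y => (V j + c j * (y - x j)) * (V j + c j * (y - x j))) (uIcc (x j) (x (j+1))) := by
      intro y hy
      rw [uIcc_of_le (hxle j).le] at hy
      simp only
      rw [key v hv j hj y hy]; ring
    rw [intervalIntegral.integral_congr this]
    have := intervalIntegral.integral_comp_sub_right
      (fun t => (V j + c j * t) * (V j + c j * t)) (x j) (a := x j) (b := x (j+1))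
    rw [this, sub_self, hdx j, cell_integral]
  have int_du2_cell : ∀ j < N, ∫ y in x j..x (j+1), (deriv u y)^2 = h * (a j)^2 := by
    intro j hj
    rw [intervalIntegral.integral_congr_ae ?_]
    · rw [intervalIntegral.integral_const, hdx j, smul_eq_mul]
    · rw [uIoc_of_le (hxle j).le]
      have hsing : (volume : Measure ℝ) {x (j+1)} = 0 := measure_singleton _
      filter_upwards [compl_mem_ae_iff.mpr hsing] with y hy hy2
      have : y ∈ Ioo (x j) (x (j+1)) := ⟨hy2.1, lt_of_le_of_ne hy2.2 hy⟩
      rw [hderiv j hj y this]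
  -- totals
  have tot_uv : ∫ y in (0:ℝ)..Λ, u y * v y =
      ∑ j ∈ Finset.range N, (U j * V j * h + (a j * V j + U j * c j) * h^2/2 + a j * c j * h^3/3) := by
    rw [← hx0, ← hxN, ← intervalIntegral.sum_integral_adjacent_intervals
      (fun k hk => hint_uv k hk)]
    exact Finset.sum_congr rfl (fun j hj => int_uv_cell j (Finset.mem_range.mp hj))
  have tot_v2 : ∫ y in (0:ℝ)..Λ, (v y)^2 =
      ∑ j ∈ Finset.range N, (V j * V j * h + (c j * V j + V j * c j) * h^2/2 + c j * c j * h^3/3) := by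
    rw [← hx0, ← hxN, ← intervalIntegral.sum_integral_adjacent_intervals
      (fun k hk => hint_v2 k hk)]
    exact Finset.sum_congr rfl (fun j hj => int_v2_cell j (Finset.mem_range.mp hj))
  have tot_du2 : ∫ y in (0:ℝ)..Λ, (deriv u y)^2 =
      ∑ j ∈ Finset.range N, h * (a j)^2 := by
    rw [← hx0, ← hxN, ← intervalIntegral.sum_integral_adjacent_intervals
      (fun k hk => hint_du2 k hk)]
    exact Finset.sum_congr rfl (fun j hj => int_du2_cell j (Finset.mem_range.mp hj))
  -- cell value of v^2 in symmetric form
  have cellval : ∀ j : ℕ, V j * V j * h + (c j * V j + V j * c j) * h^2/2 + c j * c j * h^3/3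
      = (h/3) * (V j^2 + V j * V (j+1) + V (j+1)^2) := by
    intro j; simp only [hc]; field_simp; ring
  -- telescoping
  have tele : ∑ j ∈ Finset.range N, (U (j+1) * V (j+1) - U j * V j) = U N * V N - U 0 * V 0 :=
    Finset.sum_range_sub (fun j => U j * V j) N
  have term_id : ∀ j : ℕ, h * (U j * V j)
      - (U j * V j * h + (a j * V j + U j * c j) * h^2/2 + a j * c j * h^3/3)
      = -(h/2) * (U (j+1) * V (j+1) - U j * V j) + (h^3/6) * (a j * c j) := by
    intro j; simp only [ha, hc]; field_simp; ring
  have delta_eq : dInner Λ N u v - ∫ y in (0:ℝ)..Λ, u y * v y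
      = (h/2) * (U 0 * V 0) + (h^3/6) * ∑ j ∈ Finset.range N, a j * c j := by
    have hd : dInner Λ N u v = ∑ j ∈ Finset.range N, h * (U j * V j) := by
      rw [dInner, Finset.mul_sum]
    rw [tot_uv, hd, ← Finset.sum_sub_distrib,
      Finset.sum_congr rfl (fun j _ => term_id j), Finset.sum_add_distrib,
      ← Finset.mul_sum, ← Finset.mul_sum, tele, hUN, hVN]
    ring
  rw [delta_eq, tot_du2, tot_v2]
  set S : ℝ := ∑ j ∈ Finset.range N, a j * c j with hS
  set E1 : ℝ := ∑ j ∈ Finset.range N, h * (a j)^2 with hE1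
  set E2 : ℝ := ∑ j ∈ Finset.range N,
    (V j * V j * h + (c j * V j + V j * c j) * h^2/2 + c j * c j * h^3/3) with hE2
  clear_value h x U V a c S E1 E2
  have hE1nn : 0 ≤ E1 := by
    rw [hE1]; exact Finset.sum_nonneg (fun j _ => mul_nonneg hh0.le (sq_nonneg _))
  have cell_lb : ∀ j : ℕ, (h/6) * (V j^2 + V (j+1)^2)
      ≤ V j * V j * h + (c j * V j + V j * c j) * h^2/2 + c j * c j * h^3/3 := by
    intro j
    rw [cellval j]
    linarith [mul_nonneg hh0.le (sq_nonneg (V j + V (j+1)))]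
  have cell_nn : ∀ j : ℕ, 0 ≤ V j * V j * h + (c j * V j + V j * c j) * h^2/2 + c j * c j * h^3/3 := by
    intro j
    refine le_trans ?_ (cell_lb j)
    exact mul_nonneg (by linarith) (by positivity)
  have hE2nn : 0 ≤ E2 := by
    rw [hE2]; exact Finset.sum_nonneg (fun j _ => cell_nn j)
  -- Cauchy–Schwarz quantities
  set A : ℝ := ∑ j ∈ Finset.range N, (a j)^2 with hA
  set Cc : ℝ := ∑ j ∈ Finset.range N, (c j)^2 with hCc
  clear_value A Cc
  have hAnn : 0 ≤ A := by rw [hA]; exact Finset.sum_nonneg (fun j _ => sq_nonneg _)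
  have hCcnn : 0 ≤ Cc := by rw [hCc]; exact Finset.sum_nonneg (fun j _ => sq_nonneg _)
  have hE1A : E1 = h * A := by rw [hE1, hA, Finset.mul_sum]
  have hCS : S^2 ≤ A * Cc := by
    rw [hS, hA, hCc]
    exact Finset.sum_mul_sq_le_sq_mul_sq _ _ _
  -- bound on U 0
  have hU0 : (U 0)^2 ≤ Λ * E1 := by
    have hU0sum : U 0 = -∑ j ∈ Finset.range N, h * a j := by
      have t2 := Finset.sum_range_sub U N
      have e : ∑ j ∈ Finset.range N, h * a j = ∑ j ∈ Finset.range N, (U (j+1) - U j) :=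
        Finset.sum_congr rfl (fun j _ => by simp only [ha]; field_simp)
      rw [e, t2, hUN]; ring
    have cs := Finset.sum_mul_sq_le_sq_mul_sq (Finset.range N)
      (fun _ => Real.sqrt h) (fun j => Real.sqrt h * a j)
    have e1 : ∀ j ∈ Finset.range N, Real.sqrt h * (Real.sqrt h * a j) = h * a j := by
      intro j _; rw [← mul_assoc, Real.mul_self_sqrt hh0.le]
    have e2 : ∀ j ∈ Finset.range N, (Real.sqrt h)^2 = h := by
      intro j _; exact Real.sq_sqrt hh0.le
    have e3 : ∀ j ∈ Finset.range N, (Real.sqrt h * a j)^2 = h * (a j)^2 := by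
      intro j _; rw [mul_pow, Real.sq_sqrt hh0.le]
    rw [Finset.sum_congr rfl e1, Finset.sum_congr rfl e2, Finset.sum_congr rfl e3] at cs
    rw [Finset.sum_const, Finset.card_range, nsmul_eq_mul] at cs
    have hNh : (N:ℝ) * h = Λ := by rw [hh]; field_simp
    rw [hNh, ← hE1] at cs
    calc (U 0)^2 = (∑ j ∈ Finset.range N, h * a j)^2 := by rw [hU0sum]; ring
      _ ≤ Λ * E1 := cs
  -- bound on V 0
  have hV0 : (V 0)^2 * h ≤ 6 * E2 := by
    have h0mem : 0 ∈ Finset.range N := Finset.mem_range.mpr hN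
    have hsingle := Finset.single_le_sum (f := fun j =>
      V j * V j * h + (c j * V j + V j * c j) * h^2/2 + c j * c j * h^3/3)
      (fun j _ => cell_nn j) h0mem
    have := cell_lb 0
    rw [← hE2] at hsingle
    linarith [mul_nonneg hh0.le (sq_nonneg (V 1))]
  -- inverse inequality for v
  have hc2 : h^3 * Cc ≤ 12 * E2 := by
    rw [hCc, Finset.mul_sum, hE2, Finset.mul_sum]
    apply Finset.sum_le_sum
    intro j _
    have hcj : c j * h = V (j+1) - V j := by simp only [hc]; field_simp
    rw [cellval j]
    have he : h^3 * (c j)^2 = h * (c j * h)^2 := by ring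
    rw [he, hcj]
    linarith [mul_nonneg hh0.le (sq_nonneg (V j + V (j+1)))]
  -- the two term bounds
  have m1 : (U 0)^2 * ((V 0)^2 * h) ≤ (Λ * E1) * (6 * E2) :=
    mul_le_mul hU0 hV0 (mul_nonneg (sq_nonneg _) hh0.le) (mul_nonneg hΛ.le hE1nn)
  have bound1 : |h/2 * (U 0 * V 0)| ≤ Real.sqrt (3*Λ/2 * (h * (E1 * E2))) := by
    rw [← Real.sqrt_sq_eq_abs]
    apply Real.sqrt_le_sqrt
    calc (h/2 * (U 0 * V 0))^2 = (h/4) * ((U 0)^2 * ((V 0)^2 * h)) := by ring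
      _ ≤ (h/4) * ((Λ * E1) * (6 * E2)) := mul_le_mul_of_nonneg_left m1 (by linarith)
      _ = 3*Λ/2 * (h * (E1 * E2)) := by ring
  have bound2 : |h^3/6 * S| ≤ Real.sqrt (Λ/3 * (h * (E1 * E2))) := by
    rw [← Real.sqrt_sq_eq_abs]
    apply Real.sqrt_le_sqrt
    calc (h^3/6 * S)^2 = (h^6/36) * S^2 := by ring
      _ ≤ (h^6/36) * (A * Cc) := mul_le_mul_of_nonneg_left hCS (by positivity)
      _ = (h^2/36) * E1 * (h^3 * Cc) := by rw [hE1A]; ring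
      _ ≤ (h^2/36) * E1 * (12 * E2) :=
          mul_le_mul_of_nonneg_left hc2 (mul_nonneg (by positivity) hE1nn)
      _ = (h*h) * (E1 * E2) / 3 := by ring
      _ ≤ (Λ*h) * (E1 * E2) / 3 := by
          have := mul_le_mul_of_nonneg_right (mul_le_mul_of_nonneg_right hhΛ hh0.le)
            (mul_nonneg hE1nn hE2nn)
          linarith
      _ = Λ/3 * (h * (E1 * E2)) := by ring
  calc |h/2 * (U 0 * V 0) + h^3/6 * S|
      ≤ |h/2 * (U 0 * V 0)| + |h^3/6 * S| := abs_add_le _ _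
    _ ≤ Real.sqrt (3*Λ/2 * (h * (E1 * E2))) + Real.sqrt (Λ/3 * (h * (E1 * E2))) :=
        add_le_add bound1 bound2
    _ = (Real.sqrt (3*Λ/2) + Real.sqrt (Λ/3)) * Real.sqrt h * Real.sqrt E1 * Real.sqrt E2 := by
        rw [Real.sqrt_mul (by linarith : (0:ℝ) ≤ 3*Λ/2), Real.sqrt_mul (by linarith : (0:ℝ) ≤ Λ/3),
          Real.sqrt_mul hh0.le, Real.sqrt_mul hE1nn]
        ring
end
end

section
/- Let K_ω > 0 and N a positive integer. If γ_+, γ_− ∈ ℂ are the two roots of γ² − (2 + i/(K_ωN²))γ + 1 = 0, then neither root has modulus 1; since γ_+γ_− = 1, exactly one of the two roots has modulus strictly greater than 1 and the other has modulus strictly less than 1. -/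
open Complex

noncomputable section

/-- If `γ_+` and `γ_−` are the two (distinct) roots of
`γ² − (2 + i/(K_ωN²))γ + 1 = 0` with `K_ω > 0`, then neither root has modulus `1`;
since `γ_+γ_− = 1`, exactly one root has modulus `> 1` and the other `< 1`. -/
theorem gamma_roots_moduli (Kω : ℝ) (hKω : 0 < Kω) (N : ℕ) (hN : 0 < N)
    (γp γm : ℂ)
    (hp : γp ^ 2 - (2 + I / ((Kω : ℂ) * (N : ℂ) ^ 2)) * γp + 1 = 0)
    (hm : γm ^ 2 - (2 + I / ((Kω : ℂ) * (N : ℂ) ^ 2)) * γm + 1 = 0)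
    (hne : γp ≠ γm) :
    ‖γp‖ ≠ 1 ∧ ‖γm‖ ≠ 1 ∧ γp * γm = 1 ∧
      ((1 < ‖γp‖ ∧ ‖γm‖ < 1) ∨
        (‖γp‖ < 1 ∧ 1 < ‖γm‖)) := by
  set b : ℂ := 2 + I / ((Kω : ℂ) * (N : ℂ) ^ 2) with hb
  set r : ℝ := Kω * (N : ℝ) ^ 2 with hrdef
  have hr : 0 < r := mul_pos hKω (pow_pos (by exact_mod_cast hN) 2)
  have hbr : (Kω : ℂ) * (N : ℂ) ^ 2 = (r : ℂ) := by norm_cast; rw [hrdef]; push_cast; ring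
  have hbim : b.im = r⁻¹ := by
    rw [hb, hbr]
    simp [Complex.div_im, Complex.normSq_ofReal]
  have key : ∀ γ : ℂ, γ ^ 2 - b * γ + 1 = 0 → ‖γ‖ ≠ 1 := by
    intro γ h habs
    have hγ0 : γ ≠ 0 := by
      intro h0; rw [h0] at habs; simp at habs
    have hbγ : b = γ + γ⁻¹ := by
      have h1 : b * γ = γ ^ 2 + 1 := by linear_combination -h
      field_simp
      linear_combination h1
    have hinv : γ⁻¹ = starRingEnd ℂ γ := by
      rw [Complex.inv_def]
      have : Complex.normSq γ = 1 := by
        rw [Complex.normSq_eq_norm_sq, habs]; norm_num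
      rw [this]; simp
    have : b.im = 0 := by
      rw [hbγ, hinv]
      simp
    rw [hbim] at this
    exact absurd this (by positivity)
  have hfac : (γp - γm) * (γp + γm - b) = 0 := by linear_combination hp - hm
  have hsum : γp + γm = b := by
    rcases mul_eq_zero.1 hfac with h | h
    · exact absurd (sub_eq_zero.1 h) hne
    · exact sub_eq_zero.1 h
  have hprod : γp * γm = 1 := by
    have h := hp
    rw [← hsum] at h
    linear_combination -h
  have hap : ‖γp‖ ≠ 1 := key γp hp
  have ham : ‖γm‖ ≠ 1 := key γm hm
  refine ⟨hap, ham, hprod, ?_⟩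
  have habs : ‖γp‖ * ‖γm‖ = 1 := by
    rw [← norm_mul, hprod]; simp
  rcases lt_or_gt_of_ne hap with h1 | h1
  · right
    refine ⟨h1, ?_⟩
    have h0 : 0 < ‖γp‖ := by
      rcases eq_or_lt_of_le (norm_nonneg γp) with h | h
      · exfalso; rw [← h] at habs; simp at habs
      · exact h
    nlinarith
  · left
    refine ⟨h1, ?_⟩
    nlinarith
end
end

section
/- Let Λ, K, ω, ε > 0, N a positive integer, h = Λ/N, and K_ω = K/ω. Let γ_+, γ_− ∈ ℂ be the two roots of γ² − (2 + i/(K_ωN²))γ + 1 = 0 and assume γ_+^N ≠ γ_−^N. Define b_d = −(iε/2)/( i/N + N K_ω(1 − z_d) + K_ω ã/(2a₁) ) with z_d = (γ_+^N γ_− − γ_−^N γ_+)/(γ_+^N − γ_−^N), assuming the denominator is nonzero, and α_d = −γ_−^N b_d/(γ_+^N − γ_−^N), β_d = γ_+^N b_d/(γ_+^N − γ_−^N). Then the complex-valued functions ℓ_j(t) = (α_d γ_+^{j−1} + β_d γ_−^{j−1}) e^{iωt}, j = 1,…,N+1, satisfy: (i) ℓ̇_j = Λ²K(ℓ_{j−1}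 − 2ℓ_j + ℓ_{j+1})/h² for 2 ≤ j ≤ N; (ii) ℓ_{N+1}(t) = 0 for all t; (iii) h ℓ̇₁ = Λ²K(ℓ₂ − ℓ₁)/h − (ΛK ã/(2a₁)) ℓ₁ − (Λ/2) iωε e^{iωt}; and (iv) ℓ₁(t) = b_d e^{iωt}. -/
open Complex

noncomputable section

private lemma deriv_mul_cexp (c : ℂ) (ω t : ℝ) :
    deriv (fun s : ℝ => c * Complex.exp (I * (ω:ℂ) * (s:ℂ))) t
      = c * (I * (ω:ℂ)) * Complex.exp (I * (ω:ℂ) * (t:ℂ)) := by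
  have h0 : HasDerivAt (fun s : ℝ => (s : ℂ)) 1 t := by
    simpa using (hasDerivAt_id t).ofReal_comp
  have h1 : HasDerivAt (fun s : ℝ => I * (ω:ℂ) * (s:ℂ)) (I * (ω:ℂ)) t := by
    simpa using h0.const_mul (I * (ω:ℂ))
  have h3 := (h1.cexp).const_mul c
  rw [h3.deriv]; ring

/-- The explicit functions `ℓ_j(t) = (α_d γ_+^{j−1} + β_d γ_−^{j−1}) e^{iωt}`
solve the `N`-spring discrete model with periodic forcing `L̇₀(t) = iωε e^{iωt}`:
(i) `ℓ̇_j = Λ²K(ℓ_{j−1} − 2ℓ_j + ℓ_{j+1})/h²` for `2 ≤ j ≤ N`;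
(ii) `ℓ_{N+1} ≡ 0`;
(iii) `h ℓ̇₁ = Λ²K(ℓ₂ − ℓ₁)/h − (ΛK ã/(2a₁)) ℓ₁ − (Λ/2) iωε e^{iωt}`;
(iv) `ℓ₁(t) = b_d e^{iωt}`. -/
theorem discrete_periodic_solution (Λ K a a1 ω ε : ℝ)
    (hΛ : 0 < Λ) (hK : 0 < K) (ha : 0 < a) (ha1 : 0 < a1) (hω : 0 < ω) (hε : 0 < ε)
    (N : ℕ) (hN : 0 < N) (h Kω : ℝ) (hh : h = Λ / N) (hKω : Kω = K / ω)
    (γp γm : ℂ)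
    (hp : γp ^ 2 - (2 + I / ((Kω : ℂ) * (N : ℂ) ^ 2)) * γp + 1 = 0)
    (hm : γm ^ 2 - (2 + I / ((Kω : ℂ) * (N : ℂ) ^ 2)) * γm + 1 = 0)
    (hNe : γp ^ N ≠ γm ^ N)
    (zd bd αd βd : ℂ)
    (hzd : zd = (γp ^ N * γm - γm ^ N * γp) / (γp ^ N - γm ^ N))
    (hden : I / (N : ℂ) + (N : ℂ) * (Kω : ℂ) * (1 - zd) +
      (Kω : ℂ) * (a : ℂ) / (2 * (a1 : ℂ)) ≠ 0)
    (hbd : bd = -(I * (ε : ℂ) / 2) /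
      (I / (N : ℂ) + (N : ℂ) * (Kω : ℂ) * (1 - zd) +
        (Kω : ℂ) * (a : ℂ) / (2 * (a1 : ℂ))))
    (hαd : αd = -γm ^ N * bd / (γp ^ N - γm ^ N))
    (hβd : βd = γp ^ N * bd / (γp ^ N - γm ^ N))
    (ℓ : ℕ → ℝ → ℂ)
    (hℓ : ∀ j : ℕ, 1 ≤ j → j ≤ N + 1 → ∀ t : ℝ,
      ℓ j t = (αd * γp ^ (j - 1) + βd * γm ^ (j - 1)) *
        Complex.exp (I * (ω : ℂ) * (t : ℂ))) :
    (∀ j : ℕ, 2 ≤ j → j ≤ N → ∀ t : ℝ,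
      deriv (ℓ j) t =
        (Λ : ℂ) ^ 2 * (K : ℂ) * (ℓ (j - 1) t - 2 * ℓ j t + ℓ (j + 1) t) / (h : ℂ) ^ 2) ∧
    (∀ t : ℝ, ℓ (N + 1) t = 0) ∧
    (∀ t : ℝ, (h : ℂ) * deriv (ℓ 1) t =
      (Λ : ℂ) ^ 2 * (K : ℂ) * (ℓ 2 t - ℓ 1 t) / (h : ℂ) -
        ((Λ : ℂ) * (K : ℂ) * (a : ℂ) / (2 * (a1 : ℂ))) * ℓ 1 t -
        ((Λ : ℂ) / 2) * (I * (ω : ℂ) * (ε : ℂ) * Complex.exp (I * (ω : ℂ) * (t : ℂ)))) ∧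
    (∀ t : ℝ, ℓ 1 t = bd * Complex.exp (I * (ω : ℂ) * (t : ℂ))) := by
  have hN0 : (N:ℂ) ≠ 0 := Nat.cast_ne_zero.mpr hN.ne'
  have hΛ0 : (Λ:ℂ) ≠ 0 := ofReal_ne_zero.mpr hΛ.ne'
  have hω0 : (ω:ℂ) ≠ 0 := ofReal_ne_zero.mpr hω.ne'
  have hKωpos : 0 < Kω := by rw [hKω]; positivity
  have hKω0 : (Kω:ℂ) ≠ 0 := ofReal_ne_zero.mpr hKωpos.ne'
  have ha10 : (a1:ℂ) ≠ 0 := ofReal_ne_zero.mpr ha1.ne'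
  have hD : γp^N - γm^N ≠ 0 := sub_ne_zero.mpr hNe
  have hC : (h:ℂ) = (Λ:ℂ)/(N:ℂ) := by rw [hh]; push_cast; ring
  have hKc : (K:ℂ) = (Kω:ℂ) * (ω:ℂ) := by rw [hKω]; push_cast; field_simp
  have habd : αd + βd = bd := by rw [hαd, hβd]; field_simp; ring
  have hsum2 : αd*γp + βd*γm = bd*zd := by rw [hαd, hβd, hzd]; field_simp; ring
  have hbd' : bd * (I/(N:ℂ) + (N:ℂ)*(Kω:ℂ)*(1-zd) + (Kω:ℂ)*(a:ℂ)/(2*(a1:ℂ)))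
      = -(I*(ε:ℂ)/2) := by
    rw [hbd, div_mul_cancel₀ _ hden]
  have hbd2 : bd * (I*(2*(a1:ℂ)) + (N:ℂ)^2*(Kω:ℂ)*(1-zd)*(2*(a1:ℂ)) + (N:ℂ)*(Kω:ℂ)*(a:ℂ))
      = -(I*(ε:ℂ)*(a1:ℂ)*(N:ℂ)) := by
    field_simp at hbd'
    linear_combination hbd'
  have hp' : γp^2 - 2*γp + 1 = I/((Kω:ℂ)*(N:ℂ)^2) * γp := by linear_combination hp
  have hm' : γm^2 - 2*γm + 1 = I/((Kω:ℂ)*(N:ℂ)^2) * γm := by linear_combination hm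
  have hf1 : ℓ 1 = fun s : ℝ => bd * Complex.exp (I * (ω:ℂ) * (s:ℂ)) := by
    funext s
    rw [hℓ 1 le_rfl (by omega) s]
    norm_num [habd]
  refine ⟨?_, ?_, ?_, ?_⟩
  · -- (i)
    intro j hj2 hjN t
    obtain ⟨k, rfl⟩ : ∃ k, j = k + 2 := ⟨j - 2, by omega⟩
    have hf : ℓ (k+2) = fun s : ℝ =>
        (αd*γp^(k+1)+βd*γm^(k+1)) * Complex.exp (I * (ω:ℂ) * (s:ℂ)) := by
      funext s
      rw [hℓ (k+2) (by omega) (by omega) s]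
      norm_num
    have hder : deriv (ℓ (k+2)) t
        = (αd*γp^(k+1)+βd*γm^(k+1)) * (I*(ω:ℂ)) * Complex.exp (I * (ω:ℂ) * (t:ℂ)) := by
      rw [hf]; exact deriv_mul_cexp _ _ _
    have e1 : k + 2 - 1 = k + 1 := rfl
    rw [hder, e1, hℓ (k+1) (by omega) (by omega) t, hℓ (k+2) (by omega) (by omega) t,
      hℓ (k+3) (by omega) (by omega) t, hC, hKc]
    have e2 : k + 1 - 1 = k := rfl
    have e3 : k + 3 - 1 = k + 2 := rfl
    rw [e2, e1, e3]
    have kp : ((Kω:ℂ)*(N:ℂ)^2) * (γp^k - 2*γp^(k+1) + γp^(k+2)) = I * γp^(k+1) := by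
      have h2 : ((Kω:ℂ)*(N:ℂ)^2) * (γp^2 - 2*γp + 1) = I * γp := by
        rw [hp']; field_simp
      linear_combination γp^k * h2
    have km : ((Kω:ℂ)*(N:ℂ)^2) * (γm^k - 2*γm^(k+1) + γm^(k+2)) = I * γm^(k+1) := by
      have h2 : ((Kω:ℂ)*(N:ℂ)^2) * (γm^2 - 2*γm + 1) = I * γm := by
        rw [hm']; field_simp
      linear_combination γm^k * h2
    set E := Complex.exp (I * (ω:ℂ) * (t:ℂ)) with hE
    field_simp
    linear_combination (-E) * (αd * kp + βd * km)
  · -- (ii)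
    intro t
    rw [hℓ (N+1) (by omega) le_rfl t]
    have e1 : N + 1 - 1 = N := rfl
    rw [e1]
    have hz : αd * γp ^ N + βd * γm ^ N = 0 := by
      rw [hαd, hβd]; field_simp; ring
    rw [hz, zero_mul]
  · -- (iii)
    intro t
    have hder : deriv (ℓ 1) t = bd * (I*(ω:ℂ)) * Complex.exp (I * (ω:ℂ) * (t:ℂ)) := by
      rw [hf1]; exact deriv_mul_cexp _ _ _
    rw [hder, hℓ 2 (by omega) (by omega) t]
    have h1t : ℓ 1 t = bd * Complex.exp (I * (ω:ℂ) * (t:ℂ)) := by rw [hf1]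
    rw [h1t]
    have e1 : (2:ℕ) - 1 = 1 := rfl
    rw [e1, pow_one, pow_one, hsum2, hC, hKc]
    set E := Complex.exp (I * (ω:ℂ) * (t:ℂ)) with hE
    field_simp
    linear_combination E * hbd2
  · -- (iv)
    intro t
    rw [hf1]
end
end
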